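/- (Proposition 2, part (b)) Let M ≥ 1 and let b ∈ ℂ^M have |b_k| = 1 for all k. Then there exists x ∈ X with |Σ_{k=1}^{M} conj(b_k)·x_k| ≥ (2√2/π)·M; equivalently, the maximum magnitude s_max of the equivalent transmitted symbol s(x) = (1/√M)·Σ_k conj(b_k)·x_k over x ∈ X satisfies |s_max| ≥ 2√(2M)/π. -/

import Mathlib

private lemma obg_per : Function.Periodic (fun t => |Real.cos t| + |Real.sin t|) (Real.pi/2) := by
  intro t
  simp [Real.cos_add_pi_div_two, Real.sin_add_pi_div_two, abs_neg, add_comm]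

private lemma obg_int0 : ∫ t in (0:ℝ)..(Real.pi/2), (|Real.cos t| + |Real.sin t|) = 2 := by
  have h : ∀ t ∈ Set.uIcc (0:ℝ) (Real.pi/2), |Real.cos t| + |Real.sin t| = Real.cos t + Real.sin t := by
    intro t ht
    rw [Set.uIcc_of_le (by positivity)] at ht
    rw [abs_of_nonneg (Real.cos_nonneg_of_mem_Icc ⟨by linarith [ht.1, Real.pi_pos], ht.2⟩),
      abs_of_nonneg (Real.sin_nonneg_of_nonneg_of_le_pi ht.1 (by linarith [Real.pi_pos, ht.2]))]
  rw [intervalIntegral.integral_congr h, intervalIntegral.integral_add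
    (Real.continuous_cos.intervalIntegrable _ _) (Real.continuous_sin.intervalIntegrable _ _),
    integral_cos, integral_sin]
  norm_num

private lemma obg_intshift (ψ : ℝ) :
    ∫ t in (0:ℝ)..(Real.pi/2), (|Real.cos (t+ψ)| + |Real.sin (t+ψ)|) = 2 := by
  have h := intervalIntegral.integral_comp_add_right (a := (0:ℝ)) (b := Real.pi/2)
    (fun t => |Real.cos t| + |Real.sin t|) ψ
  rw [h, zero_add, add_comm (Real.pi/2) ψ]
  have h2 := obg_per.intervalIntegral_add_eq ψ 0
  simp only [zero_add] at h2
  rw [h2, obg_int0]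

private lemma obg_remul (θ e1 e2 : ℝ) :
    (Complex.exp (↑θ * Complex.I) * ((↑e1 + ↑e2 * Complex.I)/((Real.sqrt 2 : ℝ):ℂ))).re
    = (e1 * Real.cos θ - e2 * Real.sin θ)/Real.sqrt 2 := by
  have h2 : (Real.sqrt 2 : ℝ) ≠ 0 := by positivity
  simp [Complex.exp_mul_I, Complex.div_re, Complex.normSq, Complex.mul_re, Complex.mul_im,
    Complex.cos_ofReal_re, Complex.sin_ofReal_re]
  field_simp
  ring_nf
  linear_combination (Real.cos θ * e1) * Real.sq_sqrt (by norm_num : (0:ℝ) ≤ 2)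

private lemma obg_key (c : ℂ) (hc : ‖c‖ = 1) (φ : ℝ) :
    ∃ x ∈ ({(1 + Complex.I) / Real.sqrt 2, (1 - Complex.I) / Real.sqrt 2,
      (-1 + Complex.I) / Real.sqrt 2, (-1 - Complex.I) / Real.sqrt 2} : Set ℂ),
      (Complex.exp (↑φ * Complex.I) * (c * x)).re
        = (|Real.cos (φ + c.arg)| + |Real.sin (φ + c.arg)|) / Real.sqrt 2 := by
  have hc' : c = Complex.exp (↑c.arg * Complex.I) := by
    conv_lhs => rw [← Complex.norm_mul_exp_arg_mul_I c]
    rw [hc]; simp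
  set θ := φ + c.arg with hθ
  have hexp : ∀ x : ℂ, Complex.exp (↑φ * Complex.I) * (c * x)
      = Complex.exp (↑θ * Complex.I) * x := by
    intro x
    rw [hc', ← mul_assoc, ← Complex.exp_add, hθ]
    push_cast
    ring_nf
  rcases le_or_gt 0 (Real.cos θ) with h1 | h1 <;> rcases le_or_gt 0 (Real.sin θ) with h2 | h2
  · refine ⟨(1 - Complex.I) / Real.sqrt 2, by simp, ?_⟩
    have hx : ((1:ℂ) - Complex.I)/((Real.sqrt 2:ℝ):ℂ)
        = (((1:ℝ):ℂ) + ((-1:ℝ):ℂ)*Complex.I)/((Real.sqrt 2:ℝ):ℂ) := by push_cast; ring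
    rw [hexp, hx, obg_remul, abs_of_nonneg h1, abs_of_nonneg h2]; ring
  · refine ⟨(1 + Complex.I) / Real.sqrt 2, by simp, ?_⟩
    have hx : ((1:ℂ) + Complex.I)/((Real.sqrt 2:ℝ):ℂ)
        = (((1:ℝ):ℂ) + ((1:ℝ):ℂ)*Complex.I)/((Real.sqrt 2:ℝ):ℂ) := by push_cast; ring
    rw [hexp, hx, obg_remul, abs_of_nonneg h1, abs_of_neg h2]; ring
  · refine ⟨(-1 - Complex.I) / Real.sqrt 2, by simp, ?_⟩
    have hx : (-(1:ℂ) - Complex.I)/((Real.sqrt 2:ℝ):ℂ)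
        = (((-1:ℝ):ℂ) + ((-1:ℝ):ℂ)*Complex.I)/((Real.sqrt 2:ℝ):ℂ) := by push_cast; ring
    rw [hexp, hx, obg_remul, abs_of_neg h1, abs_of_nonneg h2]; ring
  · refine ⟨(-1 + Complex.I) / Real.sqrt 2, by simp, ?_⟩
    have hx : (-(1:ℂ) + Complex.I)/((Real.sqrt 2:ℝ):ℂ)
        = (((-1:ℝ):ℂ) + ((1:ℝ):ℂ)*Complex.I)/((Real.sqrt 2:ℝ):ℂ) := by push_cast; ring
    rw [hexp, hx, obg_remul, abs_of_neg h1, abs_of_neg h2]; ring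

/-- The one-bit alphabet `  have hπ := Real.pi_pos
  set c : Fin M → ℂ := fun k => (starRingEnd ℂ) (b k) with hcdef
  have hcabs : ∀ k, Complex.abs (c k) = 1 := fun k => by
    simp [hcdef, Complex.abs_conj, hb k]
  set ψ : Fin M → ℝ := fun k => (c k).arg with hψ
  set F : ℝ → ℝ := fun φ => ∑ k, (|Real.cos (φ + ψ k)| + |Real.sin (φ + ψ k)|) with hF
  have hFcont : Continuous F := by
    apply continuous_finset_sum
    intro k _
    exact ((Real.continuous_cos.comp (continuous_id.add continuous_const)).abs).add
      ((Real.continuous_sin.comp (continuous_id.add continuous_const)).abs)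
  obtain ⟨φ₀, hmem, hmax⟩ := (isCompact_Icc (a := (0:ℝ)) (b := Real.pi/2)).exists_isMaxOn
    (Set.nonempty_Icc.mpr (by positivity)) hFcont.continuousOn
  have hInt : ∫ φ in (0:ℝ)..(Real.pi/2), F φ = 2 * M := by
    rw [hF, intervalIntegral.integral_finset_sum]
    · simp [obg_intshift, Finset.sum_const, mul_comm]
    · intro k _
      exact (((Real.continuous_cos.comp (continuous_id.add continuous_const)).abs).add
        ((Real.continuous_sin.comp (continuous_id.add continuous_const)).abs)).intervalIntegrable _ _
  have hle : ∫ φ in (0:ℝ)..(Real.pi/2), F φ ≤ ∫ _ in (0:ℝ)..(Real.pi/2), F φ₀ := by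
    apply intervalIntegral.integral_mono_on (by positivity)
      (hFcont.intervalIntegrable _ _) intervalIntegrable_const
    intro t ht
    exact hmax ht
  rw [hInt, intervalIntegral.integral_const, smul_eq_mul, sub_zero] at hle
  have hFφ : 4 * M / Real.pi ≤ F φ₀ := by
    rw [div_le_iff hπ]; linarith
  choose x hxmem hxre using fun k => obg_key (c k) (hcabs k) φ₀
  have hs2 : Real.sqrt 2 * Real.sqrt 2 = 2 := Real.mul_self_sqrt (by norm_num)
  have hs2pos : (0:ℝ) < Real.sqrt 2 := by positivity
  have hS : (Complex.exp (↑φ₀ * Complex.I) * ∑ k, c k * x k).re = F φ₀ / Real.sqrt 2 := by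
    rw [Finset.mul_sum, Complex.re_sum]
    simp only [hxre]
    rw [hF, ← Finset.sum_div]
  have habs1 : F φ₀ / Real.sqrt 2 ≤ Complex.abs (∑ k, c k * x k) := by
    calc F φ₀ / Real.sqrt 2 = (Complex.exp (↑φ₀ * Complex.I) * ∑ k, c k * x k).re := hS.symm
      _ ≤ Complex.abs (Complex.exp (↑φ₀ * Complex.I) * ∑ k, c k * x k) := Complex.re_le_abs _
      _ = Complex.abs (∑ k, c k * x k) := by
          rw [map_mul, Complex.abs_exp_ofReal_mul_I, one_mul]
  have hmain : 2 * Real.sqrt 2 / Real.pi * M ≤ Complex.abs (∑ k, c k * x k) := by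
    have heq : 2 * Real.sqrt 2 / Real.pi * M = (4 * M / Real.pi) / Real.sqrt 2 := by
      field_simp
      linear_combination (2 * (M:ℝ) * Real.pi) * hs2
    rw [heq]
    exact le_trans (by gcongr) habs1
  have hMpos : (0:ℝ) < M := by exact_mod_cast hM
  have hsMpos : (0:ℝ) < Real.sqrt M := Real.sqrt_pos.mpr hMpos
  have hsM : Real.sqrt M * Real.sqrt M = (M:ℝ) := Real.mul_self_sqrt hMpos.le
  refine ⟨x, hxmem, hmain, ?_⟩
  rw [map_mul, Complex.abs_ofReal, abs_of_nonneg (by positivity)]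
  have h2M : Real.sqrt (2 * M) = Real.sqrt 2 * Real.sqrt M := Real.sqrt_mul (by norm_num) M
  have heq2 : 2 * Real.sqrt (2 * M) / Real.pi = (1 / Real.sqrt M) * (2 * Real.sqrt 2 / Real.pi * M) := by
    rw [h2M]
    field_simp
    linear_combination (2 * Real.sqrt 2 * Real.pi) * hsM
  rw [ge_iff_le, heq2]
  gcongr = {x : x_k ∈ {(±1 ± i)/√2} for all k}`. -/
noncomputable def oneBit (M : ℕ) : Set (Fin M → ℂ) :=
  {x | ∀ k, x k ∈ ({(1 + Complex.I) / Real.sqrt 2, (1 - Complex.I) / Real.sqrt 2,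
    (-1 + Complex.I) / Real.sqrt 2, (-1 - Complex.I) / Real.sqrt 2} : Set ℂ)}

/-- **Proposition 2, part (b).** There is `x ∈   have hπ := Real.pi_pos
  set c : Fin M → ℂ := fun k => (starRingEnd ℂ) (b k) with hcdef
  have hcabs : ∀ k, Complex.abs (c k) = 1 := fun k => by
    simp [hcdef, Complex.abs_conj, hb k]
  set ψ : Fin M → ℝ := fun k => (c k).arg with hψ
  set F : ℝ → ℝ := fun φ => ∑ k, (|Real.cos (φ + ψ k)| + |Real.sin (φ + ψ k)|) with hF
  have hFcont : Continuous F := by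
    apply continuous_finset_sum
    intro k _
    exact ((Real.continuous_cos.comp (continuous_id.add continuous_const)).abs).add
      ((Real.continuous_sin.comp (continuous_id.add continuous_const)).abs)
  obtain ⟨φ₀, hmem, hmax⟩ := (isCompact_Icc (a := (0:ℝ)) (b := Real.pi/2)).exists_isMaxOn
    (Set.nonempty_Icc.mpr (by positivity)) hFcont.continuousOn
  have hInt : ∫ φ in (0:ℝ)..(Real.pi/2), F φ = 2 * M := by
    rw [hF, intervalIntegral.integral_finset_sum]
    · simp [obg_intshift, Finset.sum_const, mul_comm]
    · intro k _
      exact (((Real.continuous_cos.comp (continuous_id.add continuous_const)).abs).add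
        ((Real.continuous_sin.comp (continuous_id.add continuous_const)).abs)).intervalIntegrable _ _
  have hle : ∫ φ in (0:ℝ)..(Real.pi/2), F φ ≤ ∫ _ in (0:ℝ)..(Real.pi/2), F φ₀ := by
    apply intervalIntegral.integral_mono_on (by positivity)
      (hFcont.intervalIntegrable _ _) intervalIntegrable_const
    intro t ht
    exact hmax ht
  rw [hInt, intervalIntegral.integral_const, smul_eq_mul, sub_zero] at hle
  have hFφ : 4 * M / Real.pi ≤ F φ₀ := by
    rw [div_le_iff hπ]; linarith
  choose x hxmem hxre using fun k => obg_key (c k) (hcabs k) φ₀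
  have hs2 : Real.sqrt 2 * Real.sqrt 2 = 2 := Real.mul_self_sqrt (by norm_num)
  have hs2pos : (0:ℝ) < Real.sqrt 2 := by positivity
  have hS : (Complex.exp (↑φ₀ * Complex.I) * ∑ k, c k * x k).re = F φ₀ / Real.sqrt 2 := by
    rw [Finset.mul_sum, Complex.re_sum]
    simp only [hxre]
    rw [hF, ← Finset.sum_div]
  have habs1 : F φ₀ / Real.sqrt 2 ≤ Complex.abs (∑ k, c k * x k) := by
    calc F φ₀ / Real.sqrt 2 = (Complex.exp (↑φ₀ * Complex.I) * ∑ k, c k * x k).re := hS.symm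
      _ ≤ Complex.abs (Complex.exp (↑φ₀ * Complex.I) * ∑ k, c k * x k) := Complex.re_le_abs _
      _ = Complex.abs (∑ k, c k * x k) := by
          rw [map_mul, Complex.abs_exp_ofReal_mul_I, one_mul]
  have hmain : 2 * Real.sqrt 2 / Real.pi * M ≤ Complex.abs (∑ k, c k * x k) := by
    have heq : 2 * Real.sqrt 2 / Real.pi * M = (4 * M / Real.pi) / Real.sqrt 2 := by
      field_simp
      linear_combination (2 * (M:ℝ) * Real.pi) * hs2
    rw [heq]
    exact le_trans (by gcongr) habs1
  have hMpos : (0:ℝ) < M := by exact_mod_cast hM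
  have hsMpos : (0:ℝ) < Real.sqrt M := Real.sqrt_pos.mpr hMpos
  have hsM : Real.sqrt M * Real.sqrt M = (M:ℝ) := Real.mul_self_sqrt hMpos.le
  refine ⟨x, hxmem, hmain, ?_⟩
  rw [map_mul, Complex.abs_ofReal, abs_of_nonneg (by positivity)]
  have h2M : Real.sqrt (2 * M) = Real.sqrt 2 * Real.sqrt M := Real.sqrt_mul (by norm_num) M
  have heq2 : 2 * Real.sqrt (2 * M) / Real.pi = (1 / Real.sqrt M) * (2 * Real.sqrt 2 / Real.pi * M) := by
    rw [h2M]
    field_simp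
    linear_combination (2 * Real.sqrt 2 * Real.pi) * hsM
  rw [ge_iff_le, heq2]
  gcongr` with
`|Σ_k conj(b_k)·x_k| ≥ (2√2/π)·M`, i.e. the maximal equivalent transmitted symbol
`s(x) = (1/√M)·Σ_k conj(b_k)·x_k` satisfies `|s_max| ≥ 2√(2M)/π`. -/
theorem exists_one_bit_beamforming_gain (M : ℕ) (hM : 1 ≤ M) (b : Fin M → ℂ)
    (hb : ∀ k, ‖b k‖ = 1) :
    ∃ x ∈ oneBit M, ‖∑ k, (starRingEnd ℂ) (b k) * x k‖
      ≥ 2 * Real.sqrt 2 / Real.pi * M ∧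
      ‖((1 / Real.sqrt M : ℝ) : ℂ) * ∑ k, (starRingEnd ℂ) (b k) * x k‖
        ≥ 2 * Real.sqrt (2 * M) / Real.pi := by
  have hπ := Real.pi_pos
  set c : Fin M → ℂ := fun k => (starRingEnd ℂ) (b k) with hcdef
  have hcabs : ∀ k, ‖c k‖ = 1 := fun k => by
    simp [hcdef, Complex.norm_conj, hb k]
  set ψ : Fin M → ℝ := fun k => (c k).arg with hψ
  set F : ℝ → ℝ := fun φ => ∑ k, (|Real.cos (φ + ψ k)| + |Real.sin (φ + ψ k)|) with hF
  have hFcont : Continuous F := by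
    apply continuous_finset_sum
    intro k _
    exact ((Real.continuous_cos.comp (continuous_id.add continuous_const)).abs).add
      ((Real.continuous_sin.comp (continuous_id.add continuous_const)).abs)
  obtain ⟨φ₀, hmem, hmax⟩ := (isCompact_Icc (a := (0:ℝ)) (b := Real.pi/2)).exists_isMaxOn
    (Set.nonempty_Icc.mpr (by positivity)) hFcont.continuousOn
  have hInt : ∫ φ in (0:ℝ)..(Real.pi/2), F φ = 2 * M := by
    rw [hF, intervalIntegral.integral_finset_sum]
    · simp [obg_intshift, Finset.sum_const, mul_comm]
    · intro k _
      exact (((Real.continuous_cos.comp (continuous_id.add continuous_const)).abs).add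
        ((Real.continuous_sin.comp (continuous_id.add continuous_const)).abs)).intervalIntegrable _ _
  have hle : ∫ φ in (0:ℝ)..(Real.pi/2), F φ ≤ ∫ _ in (0:ℝ)..(Real.pi/2), F φ₀ := by
    apply intervalIntegral.integral_mono_on (by positivity)
      (hFcont.intervalIntegrable _ _) intervalIntegrable_const
    intro t ht
    exact hmax ht
  rw [hInt, intervalIntegral.integral_const, smul_eq_mul, sub_zero] at hle
  have hFφ : 4 * M / Real.pi ≤ F φ₀ := by
    rw [div_le_iff₀ hπ]; linarith
  choose x hxmem hxre using fun k => obg_key (c k) (hcabs k) φ₀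
  have hs2 : Real.sqrt 2 * Real.sqrt 2 = 2 := Real.mul_self_sqrt (by norm_num)
  have hs2pos : (0:ℝ) < Real.sqrt 2 := by positivity
  have hS : (Complex.exp (↑φ₀ * Complex.I) * ∑ k, c k * x k).re = F φ₀ / Real.sqrt 2 := by
    rw [Finset.mul_sum, Complex.re_sum]
    simp only [hxre]
    rw [hF, ← Finset.sum_div]
  have habs1 : F φ₀ / Real.sqrt 2 ≤ ‖∑ k, c k * x k‖ := by
    calc F φ₀ / Real.sqrt 2 = (Complex.exp (↑φ₀ * Complex.I) * ∑ k, c k * x k).re := hS.symm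
      _ ≤ ‖Complex.exp (↑φ₀ * Complex.I) * ∑ k, c k * x k‖ := Complex.re_le_norm _
      _ = ‖∑ k, c k * x k‖ := by
          rw [norm_mul, Complex.norm_exp_ofReal_mul_I, one_mul]
  have hmain : 2 * Real.sqrt 2 / Real.pi * M ≤ ‖∑ k, c k * x k‖ := by
    have heq : 2 * Real.sqrt 2 / Real.pi * M = (4 * M / Real.pi) / Real.sqrt 2 := by
      field_simp
      linear_combination 2 * hs2
    rw [heq]
    exact le_trans (by gcongr) habs1
  have hMpos : (0:ℝ) < M := by exact_mod_cast hM
  have hsMpos : (0:ℝ) < Real.sqrt M := Real.sqrt_pos.mpr hMpos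
  have hsM : Real.sqrt M * Real.sqrt M = (M:ℝ) := Real.mul_self_sqrt hMpos.le
  refine ⟨x, hxmem, hmain, ?_⟩
  rw [norm_mul, Complex.norm_real, Real.norm_eq_abs, abs_of_nonneg (by positivity)]
  have h2M : Real.sqrt (2 * M) = Real.sqrt 2 * Real.sqrt M := Real.sqrt_mul (by norm_num) M
  have heq2 : 2 * Real.sqrt (2 * M) / Real.pi = (1 / Real.sqrt M) * (2 * Real.sqrt 2 / Real.pi * M) := by
    rw [h2M]
    field_simp
    linear_combination hsM
  rw [ge_iff_le, heq2]
  gcongr
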